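/- Under the hypotheses of the previous statement (triangle abc with f(a) < f(b) < f(c), gradient not parallel to edges, and edge bc having an in-flow), the edge ab also has an in-flow: the negative gradient −∇f does not point into the interior of the triangle from the relative interior of edge ab. -/

import Mathlib

open EuclideanGeometry Real Set

/-- The edge `e` (a relatively open segment) of the region `P` has an *in-flow* for the
(constant) negative gradient field `-g`: from points of `e`, flowing along `-g` for small
positive time one does not enter the interior of `P`. -/
def HasInFlow (P : Set (EuclideanSpace ℝ (Fin 2))) (g : EuclideanSpace ℝ (Fin 2))
    (e : Set (EuclideanSpace ℝ (Fin 2))) : Prop :=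
  ∀ x ∈ e, ∀ᶠ t in nhdsWithin (0 : ℝ) (Set.Ioi 0), x + t • (-g) ∉ interior P

private lemma stmt4_alg (u v A Bi C : ℝ) (hA : 0 < A) (hCS : Bi^2 < A*C)
    (hp : 0 < u*A + v*Bi) (hq : 0 < (u*Bi + v*C) - (u*A + v*Bi)) (hs : u + v ≤ 0) : 0 ≤ v := by
  by_contra h
  push_neg at h
  have hD : 0 < A*C - Bi^2 := by linarith
  have h1 : (u*Bi+v*C)*A - (u*A+v*Bi)*Bi < 0 := by nlinarith [mul_neg_of_neg_of_pos h hD]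
  rcases le_or_gt Bi 0 with hBi | hBi
  · have h2 : (u*A+v*Bi)*Bi ≤ 0 := mul_nonpos_of_nonneg_of_nonpos hp.le hBi
    have h3 : 0 < (u*Bi+v*C)*A := mul_pos (by linarith) hA
    linarith
  · have hq0 : 0 < u*Bi + v*C := by linarith
    have hqA : (u*Bi+v*C)*A < (u*A+v*Bi)*Bi := by linarith
    have hAB : A < Bi := by nlinarith [mul_pos hp hA, mul_pos hq hA]
    have h2 : (u*A+v*Bi)*(C-Bi) ≤ (u*Bi+v*C)*(Bi-A) := by
      nlinarith [mul_nonpos_of_nonpos_of_nonneg hs hD.le]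
    have h3 : (u*Bi+v*C)*A*(Bi-A) < (u*A+v*Bi)*Bi*(Bi-A) :=
      mul_lt_mul_of_pos_right hqA (by linarith)
    nlinarith [mul_le_mul_of_nonneg_right h2 hA.le, mul_pos hp hD]

set_option maxHeartbeats 1600000 in
/-- Under the hypotheses of Statement 3 (nondegenerate triangle `abc`,
affine linear `f` with gradient `g`, `f(a) < f(b) < f(c)`, gradient not parallel to any
edge, and the edge `bc` has an in-flow), the edge `ab` also has an in-flow. -/
theorem stmt4 (a b c g : EuclideanSpace ℝ (Fin 2)) (c₀ : ℝ)
    (f : EuclideanSpace ℝ (Fin 2) → ℝ)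
    (hf : ∀ x, f x = inner ℝ g x + c₀)
    (hg : g ≠ 0)
    (hnd : AffineIndependent ℝ ![a, b, c])
    (hfab : f a < f b) (hfbc : f b < f c)
    (hpar_ab : ∀ t : ℝ, g ≠ t • (b - a))
    (hpar_bc : ∀ t : ℝ, g ≠ t • (c - b))
    (hpar_ac : ∀ t : ℝ, g ≠ t • (c - a))
    (hin : HasInFlow (convexHull ℝ {a, b, c}) g (openSegment ℝ b c)) :
    HasInFlow (convexHull ℝ {a, b, c}) g (openSegment ℝ a b) := by
  classical
  have hspan : affineSpan ℝ (Set.range ![a, b, c]) = ⊤ := by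
    rw [hnd.affineSpan_eq_top_iff_card_eq_finrank_add_one]
    simp [finrank_euclideanSpace]
  let B : AffineBasis (Fin 3) ℝ (EuclideanSpace ℝ (Fin 2)) := ⟨![a, b, c], hnd, hspan⟩
  have hrange : Set.range ⇑B = ({a, b, c} : Set (EuclideanSpace ℝ (Fin 2))) := by
    show Set.range ![a,b,c] = _
    ext x
    simp [Matrix.range_cons, Matrix.range_empty]
    tauto
  have hint : interior (convexHull ℝ ({a,b,c} : Set (EuclideanSpace ℝ (Fin 2))))
      = {x | ∀ i, 0 < B.coord i x} := by
    rw [← hrange, B.interior_convexHull]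
  have key : ∀ (i : Fin 3) (x w : EuclideanSpace ℝ (Fin 2)) (t : ℝ),
      B.coord i (x + t • w) = B.coord i x + t * (B.coord i).linear w := by
    intro i x w t
    have hx : x + t • w = (t • w) +ᵥ x := by rw [vadd_eq_add, add_comm]
    rw [hx, AffineMap.map_vadd, map_smul, vadd_eq_add, smul_eq_mul, add_comm]
  have key1 : ∀ (i : Fin 3) (x w : EuclideanSpace ℝ (Fin 2)),
      B.coord i (x + w) = B.coord i x + (B.coord i).linear w := by
    intro i x w
    have := key i x w 1
    simpa using this
  have hca : ∀ i : Fin 3, B.coord i a = if i = 0 then 1 else 0 := fun i => B.coord_apply i 0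
  have hcb : ∀ i : Fin 3, B.coord i b = if i = 1 then 1 else 0 := fun i => B.coord_apply i 1
  have hcc : ∀ i : Fin 3, B.coord i c = if i = 2 then 1 else 0 := fun i => B.coord_apply i 2
  have hlin : ∀ (i : Fin 3) (y : EuclideanSpace ℝ (Fin 2)),
      (B.coord i).linear (y - a) = B.coord i y - B.coord i a := by
    intro i y
    have := key1 i a (y - a)
    rw [add_sub_cancel] at this
    linarith
  have hsum : ∀ w : EuclideanSpace ℝ (Fin 2),
      (B.coord 0).linear w + (B.coord 1).linear w + (B.coord 2).linear w = 0 := by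
    intro w
    have h1 := B.sum_coord_apply_eq_one (a + w)
    have h2 := B.sum_coord_apply_eq_one a
    rw [Fin.sum_univ_three] at h1 h2
    rw [key1 0 a w, key1 1 a w, key1 2 a w] at h1
    linarith
  set u := (B.coord 1).linear g with hu
  set v := (B.coord 2).linear g with hv
  have ca0 : B.coord 0 a = 1 := by rw [hca 0]; exact if_pos rfl
  have ca1 : B.coord 1 a = 0 := by rw [hca 1]; exact if_neg (by decide)
  have ca2 : B.coord 2 a = 0 := by rw [hca 2]; exact if_neg (by decide)
  have cb0 : B.coord 0 b = 0 := by rw [hcb 0]; exact if_neg (by decide)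
  have cb1 : B.coord 1 b = 1 := by rw [hcb 1]; exact if_pos rfl
  have cb2 : B.coord 2 b = 0 := by rw [hcb 2]; exact if_neg (by decide)
  have cc0 : B.coord 0 c = 0 := by rw [hcc 0]; exact if_neg (by decide)
  have cc1 : B.coord 1 c = 0 := by rw [hcc 1]; exact if_neg (by decide)
  have cc2 : B.coord 2 c = 1 := by rw [hcc 2]; exact if_pos rfl
  have hguv : g = u • (b - a) + v • (c - a) := by
    set d := g - (u • (b - a) + v • (c - a)) with hdd
    have e1 : ∀ i : Fin 3, (B.coord i).linear d
        = (B.coord i).linear g - (u * ((B.coord i) b - (B.coord i) a)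
          + v * ((B.coord i) c - (B.coord i) a)) := by
      intro i
      rw [hdd, map_sub, map_add, map_smul, map_smul, smul_eq_mul, smul_eq_mul,
        hlin i b, hlin i c]
    have hd0 : (B.coord 0).linear d = 0 := by
      have h0 := hsum g
      rw [e1 0, ca0, cb0, cc0]
      linarith
    have hd1 : (B.coord 1).linear d = 0 := by
      rw [e1 1, ca1, cb1, cc1, ← hu]; ring
    have hd2 : (B.coord 2).linear d = 0 := by
      rw [e1 2, ca2, cb2, cc2, ← hv]; ring
    have hdz : ∀ i : Fin 3, (B.coord i).linear d = 0 := by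
      intro i
      fin_cases i
      · exact hd0
      · exact hd1
      · exact hd2
    have hd : ∀ i : Fin 3, B.coord i (a + d) = B.coord i a := by
      intro i; rw [key1, hdz i, add_zero]
    have h2 : a + d = a := B.ext_elem hd
    have h3 : d = 0 := by rwa [add_eq_left] at h2
    rw [hdd] at h3
    exact sub_eq_zero.mp h3
  -- nondegeneracy facts
  have hba : b - a ≠ 0 := by
    intro h0
    have : (B.coord 1).linear (b - a) = 1 := by rw [hlin 1 b, cb1, ca1]; ring
    rw [h0, map_zero] at this
    norm_num at this
  have hcaV : c - a ≠ 0 := by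
    intro h0
    have : (B.coord 2).linear (c - a) = 1 := by rw [hlin 2 c, cc2, ca2]; ring
    rw [h0, map_zero] at this
    norm_num at this
  have hA : 0 < (inner ℝ (b-a) (b-a) : ℝ) := by
    rw [real_inner_self_eq_norm_mul_norm]
    exact mul_pos (norm_pos_iff.mpr hba) (norm_pos_iff.mpr hba)
  -- strict Cauchy-Schwarz
  have hCS : (inner ℝ (b-a) (c-a) : ℝ)^2 < (inner ℝ (b-a) (b-a) : ℝ) * (inner ℝ (c-a) (c-a) : ℝ) := by
    have hne1 : ‖c-a‖ • (b-a) ≠ ‖b-a‖ • (c-a) := by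
      intro heq
      have h2 := congrArg (B.coord 2).linear heq
      rw [map_smul, map_smul, smul_eq_mul, smul_eq_mul, hlin 2 b, hlin 2 c,
        cb2, ca2, cc2] at h2
      have hx0 : ‖b-a‖ = 0 := by linarith [h2]
      exact hba (norm_eq_zero.mp hx0)
    have hne2 : ‖-(c-a)‖ • (b-a) ≠ ‖b-a‖ • (-(c-a)) := by
      intro heq
      have h2 := congrArg (B.coord 2).linear heq
      rw [map_smul, map_smul, smul_eq_mul, smul_eq_mul, map_neg, hlin 2 b, hlin 2 c,
        cb2, ca2, cc2] at h2
      have hx0 : ‖b-a‖ = 0 := by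
        have hn : (0:ℝ) ≤ ‖-(c-a)‖ := norm_nonneg _
        have hn2 : (0:ℝ) ≤ ‖b-a‖ := norm_nonneg _
        nlinarith [h2]
      exact hba (norm_eq_zero.mp hx0)
    have hlt1 : (inner ℝ (b-a) (c-a) : ℝ) < ‖b-a‖ * ‖c-a‖ := inner_lt_norm_mul_iff_real.mpr hne1
    have hlt2 : (inner ℝ (b-a) (-(c-a)) : ℝ) < ‖b-a‖ * ‖-(c-a)‖ :=
      inner_lt_norm_mul_iff_real.mpr hne2
    rw [inner_neg_right, norm_neg] at hlt2
    have hAn : (inner ℝ (b-a) (b-a) : ℝ) = ‖b-a‖ * ‖b-a‖ := real_inner_self_eq_norm_mul_norm _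
    have hCn : (inner ℝ (c-a) (c-a) : ℝ) = ‖c-a‖ * ‖c-a‖ := real_inner_self_eq_norm_mul_norm _
    nlinarith [hlt1, hlt2, norm_nonneg (b-a), norm_nonneg (c-a)]
  -- inner products of g with edge vectors
  have hgba : (inner ℝ g (b-a) : ℝ)
      = u * (inner ℝ (b-a) (b-a) : ℝ) + v * (inner ℝ (b-a) (c-a) : ℝ) := by
    rw [hguv, inner_add_left, real_inner_smul_left, real_inner_smul_left,
      real_inner_comm (c-a) (b-a)]
  have hgca : (inner ℝ g (c-a) : ℝ)
      = u * (inner ℝ (b-a) (c-a) : ℝ) + v * (inner ℝ (c-a) (c-a) : ℝ) := by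
    rw [hguv, inner_add_left, real_inner_smul_left, real_inner_smul_left]
  have hip : ∀ y z : EuclideanSpace ℝ (Fin 2), (inner ℝ g (y - z) : ℝ) = f y - f z := by
    intro y z
    rw [hf, hf, inner_sub_right]
    ring
  have hp : 0 < u * (inner ℝ (b-a) (b-a) : ℝ) + v * (inner ℝ (b-a) (c-a) : ℝ) := by
    rw [← hgba, hip b a]; linarith
  have hq : 0 < (u * (inner ℝ (b-a) (c-a) : ℝ) + v * (inner ℝ (c-a) (c-a) : ℝ))
      - (u * (inner ℝ (b-a) (b-a) : ℝ) + v * (inner ℝ (b-a) (c-a) : ℝ)) := by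
    rw [← hgba, ← hgca, hip b a, hip c a]; linarith
  -- in-flow at bc gives u + v ≤ 0
  have hL0 : (B.coord 0).linear (-g) = u + v := by
    rw [map_neg]
    have := hsum g
    linarith
  have hs : u + v ≤ 0 := by
    by_contra hpos
    push_neg at hpos
    set x := AffineMap.lineMap b c (1/2 : ℝ) with hx_def
    have hx : x ∈ openSegment ℝ b c := by
      rw [openSegment_eq_image_lineMap]
      exact ⟨1/2, ⟨by norm_num, by norm_num⟩, rfl⟩
    have cx0 : B.coord 0 x = 0 := by
      rw [hx_def, AffineMap.apply_lineMap, cb0, cc0]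
      simp
    have cx1 : B.coord 1 x = 1/2 := by
      rw [hx_def, AffineMap.apply_lineMap, cb1, cc1]
      simp [AffineMap.lineMap_apply]
      norm_num
    have cx2 : B.coord 2 x = 1/2 := by
      rw [hx_def, AffineMap.apply_lineMap, cb2, cc2]
      simp [AffineMap.lineMap_apply]
    have t1 : Filter.Tendsto (fun t : ℝ => B.coord 1 x + t * (B.coord 1).linear (-g))
        (nhds 0) (nhds (B.coord 1 x)) := by
      have hcont : Continuous fun t : ℝ => B.coord 1 x + t * (B.coord 1).linear (-g) :=
        continuous_const.add (continuous_id.mul continuous_const)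
      have h00 := hcont.tendsto 0
      rwa [zero_mul, add_zero] at h00
    have t2 : Filter.Tendsto (fun t : ℝ => B.coord 2 x + t * (B.coord 2).linear (-g))
        (nhds 0) (nhds (B.coord 2 x)) := by
      have hcont : Continuous fun t : ℝ => B.coord 2 x + t * (B.coord 2).linear (-g) :=
        continuous_const.add (continuous_id.mul continuous_const)
      have h00 := hcont.tendsto 0
      rwa [zero_mul, add_zero] at h00
    have e1' : ∀ᶠ t in nhds (0:ℝ), 0 < B.coord 1 x + t * (B.coord 1).linear (-g) :=
      t1.eventually (eventually_gt_nhds (by rw [cx1]; norm_num))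
    have e2' : ∀ᶠ t in nhds (0:ℝ), 0 < B.coord 2 x + t * (B.coord 2).linear (-g) :=
      t2.eventually (eventually_gt_nhds (by rw [cx2]; norm_num))
    have E2 : ∀ᶠ t in nhdsWithin (0:ℝ) (Set.Ioi 0),
        x + t • (-g) ∈ interior (convexHull ℝ ({a,b,c} : Set (EuclideanSpace ℝ (Fin 2)))) := by
      filter_upwards [eventually_mem_nhdsWithin,
        (e1'.and e2').filter_mono nhdsWithin_le_nhds] with t ht h12
      rw [hint]
      intro i
      fin_cases i
      · show 0 < B.coord 0 (x + t • (-g))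
        rw [key 0 x (-g) t, cx0, hL0, zero_add]
        exact mul_pos (Set.mem_Ioi.mp ht) hpos
      · show 0 < B.coord 1 (x + t • (-g))
        rw [key 1 x (-g) t]
        exact h12.1
      · show 0 < B.coord 2 (x + t • (-g))
        rw [key 2 x (-g) t]
        exact h12.2
    obtain ⟨t, hnot, hmem⟩ := ((hin x hx).and E2).exists
    exact hnot hmem
  -- conclude: v ≥ 0
  have hv0 : 0 ≤ v := stmt4_alg u v _ _ _ hA hCS hp hq hs
  -- in-flow at ab
  intro x hx
  rw [openSegment_eq_image_lineMap] at hx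
  obtain ⟨s, hs01, rfl⟩ := hx
  apply eventually_nhdsWithin_of_forall
  intro t ht hmem
  rw [hint] at hmem
  have h2 := hmem 2
  have cl2 : B.coord 2 (AffineMap.lineMap a b s) = 0 := by
    rw [AffineMap.apply_lineMap, ca2, cb2]
    simp
  have hL2 : (B.coord 2).linear (-g) = -v := by rw [map_neg, ← hv]
  rw [key 2 _ (-g) t, cl2, hL2, zero_add] at h2
  have ht0 : (0:ℝ) < t := Set.mem_Ioi.mp ht
  nlinarith [h2, mul_nonneg ht0.le hv0]
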